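/- Let A be an m×m real orthogonal matrix and x₁,…,xₙ vectors in R^m. Then Σ_{i,j} ⟨x_i, A x_j⟩² ≤ Σ_{i,j} ⟨x_i, x_j⟩². -/
import Mathlib
open Matrix

private lemma frob_sum {a b : ℕ} (M : Matrix (Fin a) (Fin b) ℝ) :
    trace (Mᵀ * M) = ∑ i, ∑ j, (M i j)^2 := by
  simp [Matrix.trace, Matrix.mul_apply, Matrix.diag, sq]
  exact Finset.sum_comm

/-- For A orthogonal and x₁,…,xₙ ∈ ℝ^m, Σ_{i,j} ⟨x_i, A x_j⟩² ≤ Σ_{i,j} ⟨x_i, x_j⟩². -/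
theorem sum_sq_inner_orthogonal_le (m n : ℕ) (A : Matrix (Fin m) (Fin m) ℝ)
    (hA : Aᵀ * A = 1) (x : Fin n → Fin m → ℝ) :
    ∑ i : Fin n, ∑ j : Fin n, (x i ⬝ᵥ A.mulVec (x j)) ^ 2 ≤
      ∑ i : Fin n, ∑ j : Fin n, (x i ⬝ᵥ x j) ^ 2 := by
  set X : Matrix (Fin n) (Fin m) ℝ := Matrix.of x with hX
  have hAA : A * Aᵀ = 1 := mul_eq_one_comm.mp hA
  set P : Matrix (Fin m) (Fin m) ℝ := Xᵀ * X with hP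
  have hPsymm : Pᵀ = P := by rw [hP, transpose_mul, transpose_transpose]
  have hps : ∀ k l, P l k = P k l := fun k l =>
    (Matrix.transpose_apply P k l).symm.trans (by rw [hPsymm])
  set N : Matrix (Fin m) (Fin m) ℝ := Aᵀ * P * A with hN
  have hentry1 : ∀ i j, x i ⬝ᵥ A.mulVec (x j) = (X * A * Xᵀ) i j := by
    intro i j
    simp [Matrix.mul_apply, Matrix.mulVec, dotProduct, Finset.mul_sum, Finset.sum_mul, hX]
    rw [Finset.sum_comm]
    exact Finset.sum_congr rfl fun k _ => Finset.sum_congr rfl fun l _ => by ring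
  have hentry2 : ∀ i j, x i ⬝ᵥ x j = (X * Xᵀ) i j := by
    intro i j
    simp [Matrix.mul_apply, dotProduct, hX]
  have hRHS : ∑ i : Fin n, ∑ j : Fin n, (x i ⬝ᵥ x j) ^ 2 = ∑ k, ∑ l, (P k l)^2 := by
    simp_rw [hentry2]
    rw [← frob_sum (X * Xᵀ), ← frob_sum P]
    rw [hPsymm, hP, transpose_mul, transpose_transpose]
    simp only [Matrix.mul_assoc]
    rw [Matrix.trace_mul_comm X]
    simp only [Matrix.mul_assoc]
  have hLHS : ∑ i : Fin n, ∑ j : Fin n, (x i ⬝ᵥ A.mulVec (x j)) ^ 2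
      = ∑ k, ∑ l, N k l * P k l := by
    simp_rw [hentry1]
    rw [← frob_sum (X * A * Xᵀ)]
    have h1 : (X * A * Xᵀ)ᵀ * (X * A * Xᵀ) = X * N * Xᵀ := by
      rw [hN, hP]; simp only [transpose_mul, transpose_transpose, Matrix.mul_assoc]
    rw [h1, Matrix.trace_mul_comm, ← Matrix.mul_assoc, ← hP]
    simp [Matrix.trace, Matrix.mul_apply, Matrix.diag]
    rw [Finset.sum_comm]
    exact Finset.sum_congr rfl fun k _ => Finset.sum_congr rfl fun l _ => by
      rw [hps]; ring
  have hNinv : ∑ k, ∑ l, (N k l)^2 = ∑ k, ∑ l, (P k l)^2 := by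
    rw [← frob_sum N, ← frob_sum P]
    have h2 : Nᵀ * N = Aᵀ * (Pᵀ * P) * A := by
      rw [hN]; simp only [transpose_mul, transpose_transpose, Matrix.mul_assoc]
      rw [← Matrix.mul_assoc A Aᵀ, hAA, Matrix.one_mul]
    rw [h2, Matrix.trace_mul_comm, ← Matrix.mul_assoc, hAA, Matrix.one_mul]
  rw [hLHS, hRHS]
  have hPnn : 0 ≤ ∑ k, ∑ l, (P k l)^2 := by positivity
  refine le_of_sq_le_sq ?_ hPnn
  calc (∑ k, ∑ l, N k l * P k l)^2
      = (∑ p : Fin m × Fin m, N p.1 p.2 * P p.1 p.2)^2 := by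
        rw [Fintype.sum_prod_type]
    _ ≤ (∑ p : Fin m × Fin m, (N p.1 p.2)^2) * (∑ p : Fin m × Fin m, (P p.1 p.2)^2) :=
        Finset.sum_mul_sq_le_sq_mul_sq _ _ _
    _ = (∑ k, ∑ l, (N k l)^2) * (∑ k, ∑ l, (P k l)^2) := by
        rw [Fintype.sum_prod_type, Fintype.sum_prod_type]
    _ = (∑ k, ∑ l, (P k l)^2)^2 := by rw [hNinv, sq]
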